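/- arXiv:2304.07403 — 3 statements merged into one kernel-verified Lean document; each statement's English description precedes it below -/
import Mathlib

section
/- Let G have real edge weights in [1,W], let k = ⌈log₂(nW)⌉, and for i = 0,...,k let G_i be the (A, B_i)-rounded version of G with B_i = 2^i and A = 2n^a/ε (for fixed ε > 0 and 0 < a < 1). Then for any pair s,t: dist_G(s,t) ≤ min_i (B_i/A)·dist_{G_i}(s,t), and if some shortest s-t path uses at most n^a edges, then min_i (B_i/A)·dist_{G_i}(s,t) ≤ (1+ε)·dist_G(s,t). -/
open scoped ENNReal Classical

variable {V : Type*}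

/-- Length of a walk (list of vertices) given edge weights `len`
(`len u v = ∞` means the edge `(u,v)` is absent). -/
noncomputable def walkLen (len : V → V → ℝ≥0∞) : List V → ℝ≥0∞
  | [] => 0
  | [_] => 0
  | u :: v :: rest => len u v + walkLen len (v :: rest)

lemma walkLen_cons (len : V → V → ℝ≥0∞) (u v : V) (rest : List V) :
    walkLen len (u :: v :: rest) = len u v + walkLen len (v :: rest) := rfl

lemma edge_le_walkLen (len : V → V → ℝ≥0∞) :
    ∀ p : List V, List.Chain' (fun u v => len u v ≤ walkLen len p) p
  | [] => List.isChain_nil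
  | [_] => List.isChain_singleton _
  | u :: v :: rest => by
    rw [List.Chain', List.isChain_cons_cons]
    constructor
    · rw [walkLen_cons]; exact le_add_right le_rfl
    · exact (edge_le_walkLen len (v :: rest)).imp
        (fun a b h => h.trans (by rw [walkLen_cons]; exact le_add_left le_rfl))

lemma walkLen_le_mono (c : ℝ≥0∞) (len len' : V → V → ℝ≥0∞)
    (h : ∀ u v, len u v ≤ c * len' u v) :
    ∀ p : List V, walkLen len p ≤ c * walkLen len' p
  | [] => by simp [walkLen]
  | [_] => by simp [walkLen]
  | u :: v :: rest => by
    rw [walkLen_cons, walkLen_cons, mul_add]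
    exact add_le_add (h u v) (walkLen_le_mono c len len' h (v :: rest))

lemma walkLen_key (c δ : ℝ≥0∞) (len len' : V → V → ℝ≥0∞) :
    ∀ p : List V, List.Chain' (fun u v => c * len' u v ≤ len u v + δ) p →
      c * walkLen len' p ≤ walkLen len p + (p.length - 1 : ℕ) * δ
  | [], _ => by simp [walkLen]
  | [_], _ => by simp [walkLen]
  | u :: v :: rest, h => by
    rw [List.Chain', List.isChain_cons_cons] at h
    obtain ⟨h1, h2⟩ := h
    have ih := walkLen_key c δ len len' (v :: rest) h2
    rw [walkLen_cons, walkLen_cons, mul_add]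
    calc c * len' u v + c * walkLen len' (v :: rest)
        ≤ (len u v + δ) + (walkLen len (v :: rest) + ((v :: rest).length - 1 : ℕ) * δ) :=
          add_le_add h1 ih
      _ = (len u v + walkLen len (v :: rest)) + (((v :: rest).length - 1 : ℕ) * δ + δ) := by
          ring
      _ = _ := by
          congr 1
          have : ((u :: v :: rest).length - 1 : ℕ) = ((v :: rest).length - 1 : ℕ) + 1 := by
            simp
          rw [this]
          push_cast
          ring

lemma walkLen_le_of_chain (C : ℝ≥0∞) (len : V → V → ℝ≥0∞) :
    ∀ p : List V, List.Chain' (fun u v => len u v ≤ C) p →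
      walkLen len p ≤ (p.length - 1 : ℕ) * C
  | [], _ => by simp [walkLen]
  | [_], _ => by simp [walkLen]
  | u :: v :: rest, h => by
    rw [List.Chain', List.isChain_cons_cons] at h
    have ih := walkLen_le_of_chain C len (v :: rest) h.2
    rw [walkLen_cons]
    calc len u v + walkLen len (v :: rest) ≤ C + ((v :: rest).length - 1 : ℕ) * C :=
        add_le_add h.1 ih
      _ = (((v :: rest).length - 1 : ℕ) + 1 : ℕ) * C := by push_cast; ring
      _ = _ := by simp

/-- `p` is a walk starting at `s` and ending at `t`. -/
def IsWalkFromTo (s t : V) (p : List V) : Prop :=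
  p.head? = some s ∧ p.getLast? = some t

/-- Shortest-path distance: infimum of lengths of walks from `s` to `t`. -/
noncomputable def gdist (len : V → V → ℝ≥0∞) (s t : V) : ℝ≥0∞ :=
  ⨅ (p : List V) (_ : IsWalkFromTo s t p), walkLen len p

/-- for the family of `(A, B_i)`-rounded graphs `G_i` with
`B_i = 2^i`, `A = 2n^a/ε`, `i = 0,…,k = ⌈log₂(nW)⌉`:
`dist_G(s,t) ≤ min_i (B_i/A)·dist_{G_i}(s,t)`, and if some shortest `s`-`t`
path uses at most `n^a` edges, then
`min_i (B_i/A)·dist_{G_i}(s,t) ≤ (1+ε)·dist_G(s,t)`. -/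
theorem stmt_1 [Fintype V] (len : V → V → ℝ≥0∞)
    (W ε a : ℝ) (hW : 1 ≤ W) (hε : 0 < ε) (ha0 : 0 < a) (ha1 : a < 1)
    (hw : ∀ u v, len u v ≠ ∞ → 1 ≤ len u v ∧ len u v ≤ ENNReal.ofReal W)
    (k : ℕ) (hk : k = ⌈Real.logb 2 ((Fintype.card V : ℝ) * W)⌉₊)
    (leni : ℕ → V → V → ℝ≥0∞)
    (hleni : ∀ i u v, leni i u v =
      if len u v ≤ ENNReal.ofReal ((2:ℝ)^i) then
        ((⌈(2 * (Fintype.card V : ℝ)^a / ε) * (len u v).toReal / (2:ℝ)^i⌉₊ : ℕ) : ℝ≥0∞)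
      else ∞)
    (s t : V) :
    (gdist len s t ≤
      ⨅ i ∈ Finset.range (k+1),
        ENNReal.ofReal ((2:ℝ)^i / (2 * (Fintype.card V : ℝ)^a / ε)) *
          gdist (leni i) s t) ∧
    ((∃ p, IsWalkFromTo s t p ∧ walkLen len p = gdist len s t ∧
        ((p.length : ℝ) - 1) ≤ (Fintype.card V : ℝ)^a) →
      (⨅ i ∈ Finset.range (k+1),
        ENNReal.ofReal ((2:ℝ)^i / (2 * (Fintype.card V : ℝ)^a / ε)) *
          gdist (leni i) s t) ≤
        ENNReal.ofReal (1 + ε) * gdist len s t) := by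
  classical
  have hgd : ∀ (l : V → V → ℝ≥0∞) (p : List V), IsWalkFromTo s t p →
      gdist l s t ≤ walkLen l p := fun l p hp => iInf₂_le p hp
  have hled : ∀ (l : V → V → ℝ≥0∞) (x : ℝ≥0∞),
      (∀ p, IsWalkFromTo s t p → x ≤ walkLen l p) → x ≤ gdist l s t :=
    fun l x h => le_iInf₂ h
  set n := Fintype.card V with hn
  have hn1 : (1:ℝ) ≤ (n:ℝ) := by
    have : 0 < n := Fintype.card_pos_iff.2 ⟨s⟩
    exact_mod_cast this
  set N := (n:ℝ) with hN
  have hNa : 0 < N ^ a := Real.rpow_pos_of_pos (by linarith) a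
  set A := 2 * N ^ a / ε with hA
  have hApos : 0 < A := by positivity
  have hcpos : ∀ i : ℕ, 0 < (2:ℝ)^i / A := fun i => by positivity
  have hpt : ∀ (i : ℕ) (u v : V),
      len u v ≤ ENNReal.ofReal ((2:ℝ)^i / A) * leni i u v := by
    intro i u v
    rw [hleni]
    split_ifs with h
    · have hfin : len u v ≠ ∞ := ne_top_of_le_ne_top ENNReal.ofReal_ne_top h
      set L := (len u v).toReal with hL
      have hL0 : 0 ≤ L := ENNReal.toReal_nonneg
      have h1 : A * L / 2^i ≤ (⌈A * L / 2^i⌉₊ : ℝ) := Nat.le_ceil _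
      have h2 : L ≤ (2:ℝ)^i / A * (⌈A * L / 2^i⌉₊ : ℝ) := by
        calc L = (2:ℝ)^i / A * (A * L / 2^i) := by field_simp
          _ ≤ _ := mul_le_mul_of_nonneg_left h1 (le_of_lt (hcpos i))
      calc len u v = ENNReal.ofReal L := (ENNReal.ofReal_toReal hfin).symm
        _ ≤ ENNReal.ofReal ((2:ℝ)^i / A * (⌈A * L / 2^i⌉₊ : ℝ)) :=
            ENNReal.ofReal_le_ofReal h2
        _ = ENNReal.ofReal ((2:ℝ)^i / A) * ENNReal.ofReal ((⌈A * L / 2^i⌉₊ : ℝ)) :=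
            ENNReal.ofReal_mul (le_of_lt (hcpos i))
        _ = _ := by rw [ENNReal.ofReal_natCast]
    · rw [ENNReal.mul_top ((ENNReal.ofReal_pos.2 (hcpos i)).ne')]
      exact le_top
  constructor
  · apply le_iInf₂
    intro i _
    have hc0 : (ENNReal.ofReal ((2:ℝ)^i / A)) ≠ 0 := (ENNReal.ofReal_pos.2 (hcpos i)).ne'
    have hct : (ENNReal.ofReal ((2:ℝ)^i / A)) ≠ ∞ := ENNReal.ofReal_ne_top
    rw [mul_comm, ← ENNReal.div_le_iff_le_mul (Or.inl hc0) (Or.inl hct)]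
    refine hled _ _ fun p hp => ?_
    rw [ENNReal.div_le_iff_le_mul (Or.inl hc0) (Or.inl hct)]
    calc gdist len s t ≤ walkLen len p := hgd len p hp
      _ ≤ _ := by rw [mul_comm]; exact walkLen_le_mono _ _ _ (hpt i) p
  · rintro ⟨p, hp, hlen, hcard⟩
    have hpne : p ≠ [] := by rintro rfl; simp [IsWalkFromTo] at hp
    by_cases h0 : gdist len s t = 0
    · -- distance zero: the walk has no edges, so s = t
      have hw0 : walkLen len p = 0 := by rw [hlen, h0]
      have hts : t = s := by
        rcases p with _ | ⟨x, _ | ⟨y, r⟩⟩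
        · simp [IsWalkFromTo] at hp
        · have h1 : x = s := by simpa [IsWalkFromTo] using hp.1
          have h2 : x = t := by simpa [IsWalkFromTo] using hp.2
          rw [← h1, ← h2]
        · exfalso
          rw [walkLen_cons] at hw0
          have hxy : len x y = 0 := (add_eq_zero.1 hw0).1
          have h1 := (hw x y (by simp [hxy])).1
          rw [hxy] at h1
          simp at h1
      have hg0 : gdist (leni 0) s t = 0 := by
        refine le_antisymm ?_ (zero_le)
        have := hgd (leni 0) [s] ⟨rfl, by simp [hts]⟩
        simpa [walkLen] using this
      calc (⨅ i ∈ Finset.range (k+1),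
            ENNReal.ofReal ((2:ℝ)^i / A) * gdist (leni i) s t)
          ≤ ENNReal.ofReal ((2:ℝ)^0 / A) * gdist (leni 0) s t :=
            iInf₂_le 0 (by simp)
        _ = 0 := by rw [hg0, mul_zero]
        _ ≤ _ := zero_le
    · by_cases htop : gdist len s t = ∞
      · have h1 : ENNReal.ofReal (1+ε) * gdist len s t = ∞ := by
          rw [htop, ENNReal.mul_top (ENNReal.ofReal_pos.2 (by linarith)).ne']
        rw [h1]; exact le_top
      · set D := (gdist len s t).toReal with hD
        have hDdist : gdist len s t = ENNReal.ofReal D := (ENNReal.ofReal_toReal htop).symm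
        have hplen : 1 ≤ p.length := List.length_pos_iff.2 hpne
        set m := p.length - 1 with hm
        have hmR : (m:ℝ) = (p.length:ℝ) - 1 := by
          rw [hm, Nat.cast_sub hplen]; simp
        have hmNa : (m:ℝ) ≤ N ^ a := by rw [hmR]; exact hcard
        have hD1 : (1:ℝ) ≤ D := by
          rcases p with _ | ⟨x, _ | ⟨y, r⟩⟩
          · simp [IsWalkFromTo] at hp
          · exfalso; apply h0; rw [← hlen]; simp [walkLen]
          · have hle : len x y ≤ gdist len s t := by
              rw [← hlen, walkLen_cons]; exact le_self_add
            have hfin : len x y ≠ ∞ := ne_top_of_le_ne_top htop hle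
            have h1 : (1:ℝ≥0∞) ≤ gdist len s t := (hw x y hfin).1.trans hle
            calc (1:ℝ) = (1:ℝ≥0∞).toReal := by simp
              _ ≤ D := ENNReal.toReal_mono htop h1
        have hch : List.Chain' (fun u v => len u v ≤ gdist len s t) p :=
          (edge_le_walkLen len p).imp (fun u v h => h.trans_eq hlen)
        have hchW : List.Chain' (fun u v => len u v ≤ ENNReal.ofReal W) p :=
          hch.imp (fun u v h => (hw u v (ne_top_of_le_ne_top htop h)).2)
        have hDmW : D ≤ (m:ℝ) * W := by
          have h3 : gdist len s t ≤ ENNReal.ofReal ((m:ℝ) * W) := by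
            rw [← hlen]
            calc walkLen len p ≤ (m : ℝ≥0∞) * ENNReal.ofReal W :=
                walkLen_le_of_chain _ len p hchW
              _ = ENNReal.ofReal ((m:ℝ) * W) := by
                rw [← ENNReal.ofReal_natCast m, ← ENNReal.ofReal_mul (Nat.cast_nonneg m)]
          calc D ≤ (ENNReal.ofReal ((m:ℝ) * W)).toReal :=
              ENNReal.toReal_mono ENNReal.ofReal_ne_top h3
            _ ≤ (m:ℝ) * W := by
              rw [ENNReal.toReal_ofReal (mul_nonneg (Nat.cast_nonneg m) (by linarith))]
        have hNaN : N ^ a ≤ N := by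
          calc N ^ a ≤ N ^ (1:ℝ) := Real.rpow_le_rpow_of_exponent_le hn1 ha1.le
            _ = N := Real.rpow_one N
        have hDk : D ≤ (2:ℝ)^k := by
          have hNW1 : (1:ℝ) ≤ N * W := by nlinarith
          have h2k : N * W ≤ (2:ℝ)^k := by
            calc N * W = (2:ℝ)^(Real.logb 2 (N*W)) :=
                (Real.rpow_logb (by norm_num) (by norm_num) (by linarith)).symm
              _ ≤ (2:ℝ)^((k:ℝ)) :=
                Real.rpow_le_rpow_of_exponent_le (by norm_num)
                  (by rw [hk]; exact Nat.le_ceil _)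
              _ = (2:ℝ)^k := Real.rpow_natCast 2 k
          have hW0 : (0:ℝ) ≤ W := by linarith
          calc D ≤ (m:ℝ) * W := hDmW
            _ ≤ N ^ a * W := mul_le_mul_of_nonneg_right hmNa hW0
            _ ≤ N * W := mul_le_mul_of_nonneg_right hNaN hW0
            _ ≤ (2:ℝ)^k := h2k
        have hex : ∃ j : ℕ, D ≤ (2:ℝ)^j := ⟨k, hDk⟩
        set i := Nat.find hex with hi
        have hik : i ≤ k := Nat.find_min' hex hDk
        have hDi : D ≤ (2:ℝ)^i := Nat.find_spec hex
        have hBi : (2:ℝ)^i ≤ 2 * D := by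
          rcases Nat.eq_zero_or_pos i with h | h
          · rw [h, pow_zero]; linarith
          · have hlt : ¬ D ≤ (2:ℝ)^(i-1) := Nat.find_min hex (Nat.sub_lt h one_pos)
            push_neg at hlt
            have h2 : (2:ℝ)^i = 2 * (2:ℝ)^(i-1) := by
              rw [← pow_succ', Nat.sub_add_cancel h]
            rw [h2]; linarith
        set c : ℝ≥0∞ := ENNReal.ofReal ((2:ℝ)^i / A) with hc
        have hch2 : List.Chain' (fun u v => c * leni i u v ≤ len u v + c) p := by
          refine hch.imp (fun u v h => ?_)
          have hfin : len u v ≠ ∞ := ne_top_of_le_ne_top htop h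
          have hle2 : len u v ≤ ENNReal.ofReal ((2:ℝ)^i) := by
            rw [hDdist] at h
            exact h.trans (ENNReal.ofReal_le_ofReal hDi)
          rw [hleni, if_pos hle2]
          set L := (len u v).toReal with hL
          have hL0 : (0:ℝ) ≤ L := ENNReal.toReal_nonneg
          have hceil : (⌈A * L / 2^i⌉₊:ℝ) ≤ A * L / 2^i + 1 :=
            (Nat.ceil_lt_add_one (by positivity)).le
          calc c * ((⌈A * L / 2^i⌉₊ : ℕ) : ℝ≥0∞)
              = ENNReal.ofReal ((2:ℝ)^i / A * (⌈A * L / 2^i⌉₊:ℝ)) := by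
                rw [hc, ← ENNReal.ofReal_natCast, ← ENNReal.ofReal_mul (hcpos i).le]
            _ ≤ ENNReal.ofReal (L + (2:ℝ)^i / A) := by
                refine ENNReal.ofReal_le_ofReal ?_
                calc (2:ℝ)^i / A * (⌈A * L / 2^i⌉₊:ℝ)
                    ≤ (2:ℝ)^i / A * (A * L / 2^i + 1) :=
                      mul_le_mul_of_nonneg_left hceil (hcpos i).le
                  _ = L + (2:ℝ)^i / A := by field_simp
            _ = ENNReal.ofReal L + ENNReal.ofReal ((2:ℝ)^i / A) :=
                ENNReal.ofReal_add hL0 (hcpos i).le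
            _ = len u v + c := by rw [hL, ENNReal.ofReal_toReal hfin, hc]
        have hkey := walkLen_key c c len (leni i) p hch2
        rw [← hm] at hkey
        have hmc : (m : ℝ≥0∞) * c ≤ ENNReal.ofReal ε * gdist len s t := by
          have heq : N ^ a * ((2:ℝ)^i / A) = (2:ℝ)^i * ε / 2 := by
            rw [hA]; field_simp
          have hr : (m:ℝ) * ((2:ℝ)^i / A) ≤ ε * D := by
            calc (m:ℝ) * ((2:ℝ)^i / A) ≤ N ^ a * ((2:ℝ)^i / A) :=
                mul_le_mul_of_nonneg_right hmNa (hcpos i).le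
              _ = (2:ℝ)^i * ε / 2 := heq
              _ ≤ ε * D := by nlinarith
          calc (m : ℝ≥0∞) * c = ENNReal.ofReal ((m:ℝ) * ((2:ℝ)^i / A)) := by
                rw [hc, ← ENNReal.ofReal_natCast m,
                  ← ENNReal.ofReal_mul (Nat.cast_nonneg m)]
            _ ≤ ENNReal.ofReal (ε * D) := ENNReal.ofReal_le_ofReal hr
            _ = ENNReal.ofReal ε * gdist len s t := by
              rw [ENNReal.ofReal_mul hε.le, hDdist]
        calc (⨅ j ∈ Finset.range (k+1),
              ENNReal.ofReal ((2:ℝ)^j / A) * gdist (leni j) s t)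
            ≤ c * gdist (leni i) s t :=
              iInf₂_le i (Finset.mem_range.2 (Nat.lt_succ_of_le hik))
          _ ≤ c * walkLen (leni i) p := mul_le_mul_right (hgd _ p hp) c
          _ ≤ walkLen len p + (m : ℝ≥0∞) * c := hkey
          _ = gdist len s t + (m : ℝ≥0∞) * c := by rw [hlen]
          _ ≤ gdist len s t + ENNReal.ofReal ε * gdist len s t := add_le_add le_rfl hmc
          _ = (1 + ENNReal.ofReal ε) * gdist len s t := by ring
          _ = ENNReal.ofReal (1 + ε) * gdist len s t := by
              rw [ENNReal.ofReal_add (by norm_num) hε.le, ENNReal.ofReal_one]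
end

section
/- Let G be a directed graph with positive integer edge weights and let s,t be vertices with dist_G(s,t) < ∞. Let P ⊇ {v : v lies on some shortest s-t path}. The greedy procedure that sorts P by dist_G(s,·) in ascending order, starts with v_last = s, and appends each scanned vertex v satisfying len_G(v_last,v) + dist_G(v,t) = dist_G(v_last,t) (updating v_last ← v), outputs a shortest s-t path in G. -/
open scoped ENNReal Classical

variable {V : Type*}

/-- The greedy scan: given the target `t`, a current last vertex and the
remaining sorted queue, append a scanned vertex `v` whenever
`len(v_last,v) + dist(v,t) = dist(v_last,t)`. -/
noncomputable def greedy (len : V → V → ℝ≥0∞) (t : V) : V → List V → List V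
  | _, [] => []
  | vlast, v :: rest =>
    if len vlast v + gdist len v t = gdist len vlast t then
      v :: greedy len t v rest
    else
      greedy len t vlast rest

variable {len : V → V → ℝ≥0∞}

lemma walkLen_cons_cons (a b : V) (l : List V) :
    walkLen len (a :: b :: l) = len a b + walkLen len (b :: l) := rfl

lemma gdist_le {u v : V} {p : List V} (hp : IsWalkFromTo u v p) :
    gdist len u v ≤ walkLen len p := iInf₂_le p hp

lemma isWalk_single (v : V) : IsWalkFromTo v v [v] := ⟨rfl, rfl⟩

lemma gdist_self (len : V → V → ℝ≥0∞) (v : V) : gdist len v v = 0 :=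
  le_antisymm (gdist_le (isWalk_single v)) zero_le

lemma walkLen_nat (hint : ∀ u v, len u v = ∞ ∨ ∃ k : ℕ, 0 < k ∧ len u v = (k : ℝ≥0∞)) :
    ∀ p : List V, walkLen len p ≠ ∞ → ∃ n : ℕ, walkLen len p = n
  | [] => fun _ => ⟨0, by simp [walkLen]⟩
  | [_] => fun _ => ⟨0, by simp [walkLen]⟩
  | a :: b :: l => fun h => by
      rw [walkLen_cons_cons] at h ⊢
      rcases hint a b with hab | ⟨k, _, hab⟩
      · exact absurd (by simp [hab]) h
      rcases walkLen_nat hint (b :: l) (fun hl => h (by simp [hl])) with ⟨n, hn⟩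
      exact ⟨k + n, by rw [hab, hn]; push_cast; ring⟩

lemma exists_walk_lt {u v : V} {c : ℝ≥0∞} (h : gdist len u v < c) :
    ∃ p, IsWalkFromTo u v p ∧ walkLen len p < c := by
  have := (iInf_lt_iff).mp h
  rcases this with ⟨p, hp⟩
  rcases (iInf_lt_iff).mp hp with ⟨hw, hlt⟩
  exact ⟨p, hw, hlt⟩

lemma gdist_exists (hint : ∀ u v, len u v = ∞ ∨ ∃ k : ℕ, 0 < k ∧ len u v = (k : ℝ≥0∞))
    {u v : V} (h : gdist len u v ≠ ∞) :
    ∃ p, IsWalkFromTo u v p ∧ walkLen len p = gdist len u v := by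
  obtain ⟨p0, hw0, hlt0⟩ := exists_walk_lt (lt_top_iff_ne_top.mpr h)
  have hfin0 : walkLen len p0 ≠ ∞ := ne_top_of_lt hlt0
  obtain ⟨n0, hn0⟩ := walkLen_nat hint p0 hfin0
  have hS : ∃ n : ℕ, ∃ p, IsWalkFromTo u v p ∧ walkLen len p = n := ⟨n0, p0, hw0, hn0⟩
  classical
  set m := Nat.find hS with hm
  obtain ⟨pm, hwm, hlm⟩ := Nat.find_spec hS
  refine ⟨pm, hwm, ?_⟩
  rw [hlm]
  refine le_antisymm ?_ ((gdist_le hwm).trans_eq hlm)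
  unfold gdist
  refine le_iInf₂ fun p hp => ?_
  by_cases hpf : walkLen len p = ∞
  · rw [hpf]; exact le_top
  obtain ⟨n, hn⟩ := walkLen_nat hint p hpf
  rw [hn]
  exact_mod_cast Nat.find_min' hS ⟨p, hp, hn⟩

lemma gdist_le_edge (hint : ∀ u v, len u v = ∞ ∨ ∃ k : ℕ, 0 < k ∧ len u v = (k : ℝ≥0∞))
    (u w t : V) : gdist len u t ≤ len u w + gdist len w t := by
  by_cases hw : gdist len w t = ∞
  · rw [hw]; simp
  obtain ⟨p, ⟨hph, hpl⟩, hplen⟩ := gdist_exists hint hw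
  cases p with
  | nil => simp at hph
  | cons a p' =>
    have ha : a = w := by simpa using hph
    subst ha
    have hwalk : IsWalkFromTo u t (u :: a :: p') := ⟨rfl, by rwa [List.getLast?_cons_cons]⟩
    calc gdist len u t ≤ walkLen len (u :: a :: p') := gdist_le hwalk
      _ = len u a + walkLen len (a :: p') := rfl
      _ = len u a + gdist len a t := by rw [hplen]

lemma walkLen_append {v : V} :
    ∀ p : List V, p.getLast? = some v → ∀ q : List V, q.head? = some v →
      walkLen len (p ++ q.tail) = walkLen len p + walkLen len q
  | [], h => by simp at h
  | [a], h => fun q hq => by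
      have ha : a = v := by simpa using h
      subst ha
      cases q with
      | nil => simp at hq
      | cons b q' =>
        have hb : b = a := by simpa using hq
        subst hb
        simp [walkLen]
  | a :: b :: l, h => fun q hq => by
      rw [List.getLast?_cons_cons] at h
      have ih := walkLen_append (b :: l) h q hq
      simp only [List.cons_append] at ih ⊢
      rw [walkLen_cons_cons, walkLen_cons_cons, ih, add_assoc]

lemma gdist_triangle (hint : ∀ u v, len u v = ∞ ∨ ∃ k : ℕ, 0 < k ∧ len u v = (k : ℝ≥0∞))
    (u v w : V) : gdist len u w ≤ gdist len u v + gdist len v w := by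
  by_cases h1 : gdist len u v = ∞
  · rw [h1]; simp
  by_cases h2 : gdist len v w = ∞
  · rw [h2]; simp
  obtain ⟨p, ⟨hph, hpl⟩, hplen⟩ := gdist_exists hint h1
  obtain ⟨q, ⟨hqh, hql⟩, hqlen⟩ := gdist_exists hint h2
  have hwalk : IsWalkFromTo u w (p ++ q.tail) := by
    constructor
    · cases p with
      | nil => simp at hph
      | cons a p' => simpa using hph
    · cases q with
      | nil => simp at hqh
      | cons b q' =>
        cases q' with
        | nil =>
          have hbv : b = v := by simpa using hqh
          have hbw : b = w := by simpa using hql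
          have hvw : v = w := hbv ▸ hbw
          simpa [← hvw] using hpl
        | cons c q'' =>
          rw [List.getLast?_cons_cons] at hql
          simp only [List.tail_cons]
          rw [List.getLast?_append, hql]; rfl
  calc gdist len u w ≤ walkLen len (p ++ q.tail) := gdist_le hwalk
    _ = walkLen len p + walkLen len q := walkLen_append p hpl q hqh
    _ = gdist len u v + gdist len v w := by rw [hplen, hqlen]

lemma exists_succ (hint : ∀ u v, len u v = ∞ ∨ ∃ k : ℕ, 0 < k ∧ len u v = (k : ℝ≥0∞))
    {u t : V} (h : gdist len u t ≠ ∞) (hne : u ≠ t) :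
    ∃ w, len u w + gdist len w t = gdist len u t := by
  obtain ⟨p, ⟨hph, hpl⟩, hplen⟩ := gdist_exists hint h
  cases p with
  | nil => simp at hph
  | cons a rest =>
    have ha : a = u := by simpa using hph
    subst ha
    cases rest with
    | nil => exact absurd (by simpa using hpl) hne
    | cons w p' =>
      rw [List.getLast?_cons_cons] at hpl
      refine ⟨w, le_antisymm ?_ (gdist_le_edge hint a w t)⟩
      calc len a w + gdist len w t ≤ len a w + walkLen len (w :: p') :=
            add_le_add_right (gdist_le (p := w :: p') ⟨rfl, hpl⟩) _
        _ = walkLen len (a :: w :: p') := rfl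
        _ = gdist len a t := hplen

lemma gdist_le_len (u v : V) : gdist len u v ≤ len u v := by
  have h := gdist_le (len := len) (u := u) (v := v) (p := [u, v]) ⟨rfl, rfl⟩
  simpa [walkLen_cons_cons, walkLen] using h

lemma greedy_main (hint : ∀ u v, len u v = ∞ ∨ ∃ k : ℕ, 0 < k ∧ len u v = (k : ℝ≥0∞))
    {s t : V} (hfin : gdist len s t ≠ ∞) {q : List V}
    (hsorted : q.Pairwise fun u v => gdist len s u ≤ gdist len s v)
    (hall : ∀ v, gdist len s v + gdist len v t = gdist len s t → v ∈ q) :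
    ∀ rest : List V, ∀ vlast : V, rest <:+ q →
      gdist len s vlast + gdist len vlast t = gdist len s t →
      (∀ w, len vlast w + gdist len w t = gdist len vlast t → w ∈ rest) →
      IsWalkFromTo vlast t (vlast :: greedy len t vlast rest) ∧
        walkLen len (vlast :: greedy len t vlast rest) = gdist len vlast t := by
  intro rest
  induction rest with
  | nil =>
    intro vlast _ h1 h2
    have hsum : gdist len s vlast + gdist len vlast t ≠ ∞ := by rw [h1]; exact hfin
    have hvt : gdist len vlast t ≠ ∞ := (ENNReal.add_ne_top.mp hsum).2
    by_cases hvl : vlast = t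
    · have hgr : greedy len t vlast [] = [] := by rw [greedy]
      rw [hgr]
      refine ⟨⟨rfl, by simp [hvl]⟩, ?_⟩
      rw [hvl]
      simp [walkLen, gdist_self]
    · obtain ⟨w, hw⟩ := exists_succ hint hvt hvl
      exact absurd (h2 w hw) List.not_mem_nil
  | cons v rest2 ih =>
    intro vlast hsuf h1 h2
    have hsum : gdist len s vlast + gdist len vlast t ≠ ∞ := by rw [h1]; exact hfin
    have hvt : gdist len vlast t ≠ ∞ := (ENNReal.add_ne_top.mp hsum).2
    have hsuf2 : rest2 <:+ q := (List.suffix_cons v rest2).trans hsuf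
    by_cases hc : len vlast v + gdist len v t = gdist len vlast t
    · -- append v
      have hgr : greedy len t vlast (v :: rest2) = v :: greedy len t v rest2 := by
        rw [greedy, if_pos hc]
      have hvt2 : gdist len v t ≠ ∞ := fun h => hvt (by rw [← hc, h]; simp)
      have h1v : gdist len s v + gdist len v t = gdist len s t := by
        refine le_antisymm ?_ (gdist_triangle hint s v t)
        calc gdist len s v + gdist len v t
            ≤ (gdist len s vlast + len vlast v) + gdist len v t := by
              refine add_le_add_left ((gdist_triangle hint s vlast v).trans ?_) _
              exact add_le_add_right (gdist_le_len vlast v) _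
          _ = gdist len s vlast + (len vlast v + gdist len v t) := by rw [add_assoc]
          _ = gdist len s vlast + gdist len vlast t := by rw [hc]
          _ = gdist len s t := h1
      have hsv2 : gdist len s v ≠ ∞ := by
        have : gdist len s v + gdist len v t ≠ ∞ := by rw [h1v]; exact hfin
        exact (ENNReal.add_ne_top.mp this).1
      have h2v : ∀ w, len v w + gdist len w t = gdist len v t → w ∈ rest2 := by
        intro w hw
        have hlw_fin : len v w ≠ ∞ := fun h => hvt2 (by rw [← hw, h]; simp)
        have hwt : gdist len w t ≠ ∞ := fun h => hvt2 (by rw [← hw, h]; simp)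
        have h1w : gdist len s w + gdist len w t = gdist len s t := by
          refine le_antisymm ?_ (gdist_triangle hint s w t)
          calc gdist len s w + gdist len w t
              ≤ (gdist len s v + len v w) + gdist len w t := by
                refine add_le_add_left ((gdist_triangle hint s v w).trans ?_) _
                exact add_le_add_right (gdist_le_len v w) _
            _ = gdist len s v + gdist len v t := by rw [add_assoc, hw]
            _ = gdist len s t := h1v
        have hmem : w ∈ q := hall w h1w
        have heq : gdist len s w = gdist len s v + len v w := by
          refine (ENNReal.add_left_inj hwt).mp ?_
          rw [h1w, add_assoc, hw, h1v]
        have hlw0 : len v w ≠ 0 := by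
          rcases hint v w with h | ⟨k, hk, h⟩
          · exact absurd h hlw_fin
          · rw [h]; exact Nat.cast_ne_zero.mpr hk.ne'
        have hlt : gdist len s v < gdist len s w := by
          rw [heq]; exact ENNReal.lt_add_right hsv2 hlw0
        obtain ⟨pre, hq⟩ := hsuf
        rw [← hq] at hmem
        rcases List.mem_append.mp hmem with hpre | hcons
        · exfalso
          have hs' := hsorted
          rw [← hq] at hs'
          have := (List.pairwise_append.mp hs').2.2 w hpre v (List.mem_cons_self (a := v) (l := rest2))
          exact absurd this (not_le.mpr hlt)
        · rcases List.mem_cons.mp hcons with rfl | h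
          · exact absurd hlt (lt_irrefl _)
          · exact h
      obtain ⟨hwalk, hlen2⟩ := ih v hsuf2 h1v h2v
      rw [hgr]
      refine ⟨⟨rfl, ?_⟩, ?_⟩
      · rw [List.getLast?_cons_cons]; exact hwalk.2
      · rw [walkLen_cons_cons, hlen2, hc]
  -- skip v
    · have hgr : greedy len t vlast (v :: rest2) = greedy len t vlast rest2 := by
        rw [greedy, if_neg hc]
      rw [hgr]
      refine ih vlast hsuf2 h1 ?_
      intro w hw
      rcases List.mem_cons.mp (h2 w hw) with rfl | h
      · exact absurd hw hc
      · exact h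


/-- correctness of the greedy shortest-path reconstruction on a
directed graph with positive integer weights: scanning a superset of the
shortest-path vertices sorted by `dist(s,·)` in ascending order yields a
shortest `s`-`t` path. -/
theorem stmt_8 [Fintype V] (len : V → V → ℝ≥0∞)
    (hint : ∀ u v, len u v = ∞ ∨ ∃ k : ℕ, 0 < k ∧ len u v = (k : ℝ≥0∞))
    (s t : V) (hfin : gdist len s t ≠ ∞)
    (q : List V) (hnodup : q.Nodup)
    (hsorted : q.Pairwise fun u v => gdist len s u ≤ gdist len s v)
    (hall : ∀ v, gdist len s v + gdist len v t = gdist len s t → v ∈ q) :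
    IsWalkFromTo s t (s :: greedy len t s q) ∧
      walkLen len (s :: greedy len t s q) = gdist len s t := by

  have h1s : gdist len s s + gdist len s t = gdist len s t := by
    rw [gdist_self]; simp
  have h2s : ∀ w, len s w + gdist len w t = gdist len s t → w ∈ q := by
    intro w hw
    apply hall
    refine le_antisymm ?_ (gdist_triangle hint s w t)
    calc gdist len s w + gdist len w t ≤ len s w + gdist len w t :=
        add_le_add_left (gdist_le_len s w) _
      _ = gdist len s t := hw
  obtain ⟨hwalk, hlen⟩ := greedy_main hint hfin hsorted hall q s (List.suffix_refl q) h1s h2s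
  exact ⟨hwalk, hlen⟩
end

section
/- Let G be an undirected graph with positive edge weights and let π = (v_1, ..., v_m) be a shortest path. Suppose a vertex w is adjacent to five distinct vertices v_{i_1}, ..., v_{i_5} of π (i_1 < ... < i_5) with all five edge weights len_G(v_{i_k}, w) in the same dyadic class [2^y, 2^{y+1}), and suppose len_G(v_{i_k}, w) ≤ dist_G(v_{i_k}, v_{i_{k+1}}) for k=1,...,4. Then a contradiction follows: dist_G(v_{i_1}, v_{i_5}) < dist_G(v_{i_1}, v_{i_5}). Hence any vertex w can satisfy these adjacency conditions for at most 4 vertices of π per dyadic weight class. -/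
open scoped ENNReal Classical

variable {V : Type*}

lemma walkLen_append_cons (len : V → V → ℝ≥0∞) (p q : List V) (x : V) :
    walkLen len (p ++ x :: q) = walkLen len (p ++ [x]) + walkLen len (x :: q) := by
  induction p with
  | nil => simp [walkLen]
  | cons a p ih =>
    cases p with
    | nil => cases q <;> simp [walkLen]
    | cons b p' =>
      simp only [List.cons_append, List.append_eq, walkLen] at *
      rw [ih, add_assoc]

lemma walkLen_split (len : V → V → ℝ≥0∞) (m : ℕ) (L : List V) (hm : m < L.length) :
    walkLen len L = walkLen len (L.take (m+1)) + walkLen len (L.drop m) := by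
  conv_lhs => rw [← List.take_append_drop m L, List.drop_eq_getElem_cons hm]
  rw [walkLen_append_cons, List.take_succ, List.getElem?_eq_getElem hm,
    List.drop_eq_getElem_cons hm]
  rfl

lemma gdist_le_walkLen (len : V → V → ℝ≥0∞) {s t : V} {p : List V}
    (hp : IsWalkFromTo s t p) : gdist len s t ≤ walkLen len p :=
  iInf₂_le p hp

lemma sub_head (π : List V) {i j : ℕ} (hi : i < π.length) :
    ((π.drop i).take (j - i + 1)).head? = some π[i] := by
  rw [List.drop_eq_getElem_cons hi, List.take_succ_cons]
  rfl

lemma sub_getLast (π : List V) {i j : ℕ} (hij : i ≤ j) (hj : j < π.length) :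
    ((π.drop i).take (j - i + 1)).getLast? = some π[j] := by
  have hlen : ((π.drop i).take (j - i + 1)).length = j - i + 1 := by
    simp [List.length_take, List.length_drop]; omega
  rw [List.getLast?_eq_getElem?, hlen]
  simp only [Nat.add_sub_cancel]
  rw [List.getElem?_take_of_lt (by omega), List.getElem?_drop,
    show i + (j - i) = j by omega, List.getElem?_eq_getElem hj]

lemma sub_isWalk (π : List V) {i j : ℕ} (hij : i ≤ j) (hj : j < π.length) :
    IsWalkFromTo (π[i]'(by omega)) (π[j]'hj) ((π.drop i).take (j - i + 1)) :=
  ⟨sub_head π (by omega), sub_getLast π hij hj⟩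

lemma walkLen_eq_split3 (len : V → V → ℝ≥0∞) (π : List V) {i j : ℕ}
    (hij : i ≤ j) (hj : j < π.length) :
    walkLen len π = walkLen len (π.take (i+1)) +
      walkLen len ((π.drop i).take (j-i+1)) + walkLen len (π.drop j) := by
  rw [walkLen_split len j π hj,
    walkLen_split len i (π.take (j+1)) (by simp [List.length_take]; omega),
    List.take_take, List.drop_take,
    show min (i+1) (j+1) = i+1 by omega, show j+1-i = j-i+1 by omega]

lemma gdist_sub (len : V → V → ℝ≥0∞) {s t : V} {π : List V} (hπ : IsWalkFromTo s t π)
    (hshort : walkLen len π = gdist len s t) (hfin : gdist len s t ≠ ∞)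
    {i j : ℕ} (hij : i ≤ j) (hj : j < π.length) :
    gdist len (π[i]'(by omega)) (π[j]'hj) = walkLen len ((π.drop i).take (j-i+1)) := by
  set S := (π.drop i).take (j-i+1) with hS
  have h3 := walkLen_eq_split3 len π hij hj
  refine le_antisymm (gdist_le_walkLen len (sub_isWalk π hij hj)) ?_
  by_contra h
  push_neg at h
  obtain ⟨q, hq, hlt⟩ : ∃ q, ∃ _ : IsWalkFromTo (π[i]'(by omega)) (π[j]'hj) q,
      walkLen len q < walkLen len S := by
    simpa [gdist, iInf_lt_iff] using h
  have hqne : q ≠ [] := by rintro rfl; simp [IsWalkFromTo] at hq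
  have hqhead : q.head hqne = π[i]'(by omega) := by
    have := hq.1; rw [List.head?_eq_head hqne] at this; exact Option.some_injective _ this
  have hqlast : q.getLast hqne = π[j]'hj := by
    have := hq.2; rw [List.getLast?_eq_getLast hqne] at this
    exact Option.some_injective _ this
  set π' := π.take i ++ q ++ π.drop (j+1) with hπ'
  -- length of walkLen π'
  have hADfin : walkLen len (π.take (i+1)) ≠ ∞ ∧ walkLen len (π.drop j) ≠ ∞ := by
    constructor <;> intro hcon <;>
      [rw [hshort, hcon] at h3; rw [hshort, hcon] at h3] <;> simp_all
  have htake : π.take i ++ [π[i]'(by omega)] = π.take (i+1) := by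
    rw [List.take_succ, List.getElem?_eq_getElem (show i < π.length by omega)]
    rfl
  have hw1 : walkLen len (π.take i ++ q) =
      walkLen len (π.take (i+1)) + walkLen len q := by
    conv_lhs => rw [← List.cons_head_tail hqne, hqhead]
    rw [walkLen_append_cons, htake]
    congr 1
    conv_rhs => rw [← List.cons_head_tail hqne, hqhead]
  have hw2 : walkLen len π' =
      walkLen len (π.take (i+1)) + walkLen len q + walkLen len (π.drop j) := by
    have hq' : π.take i ++ q = (π.take i ++ q.dropLast) ++ [π[j]'hj] := by
      rw [List.append_assoc, ← hqlast, List.dropLast_concat_getLast hqne]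
    have hdj : (π[j]'hj) :: π.drop (j+1) = π.drop j := (List.drop_eq_getElem_cons hj).symm
    rw [hπ', ← hw1, hq', List.append_assoc _ _ (π.drop (j+1)), List.singleton_append,
      walkLen_append_cons, hdj, ← hq']
  have hπ's : IsWalkFromTo s t π' := by
    obtain ⟨hh, hl⟩ := hπ
    have hlen0 : 0 < π.length := by omega
    have h0s : π[0]? = some s := by rw [← List.head?_eq_getElem?]; exact hh
    have hts : π[π.length - 1]? = some t := by rw [← List.getLast?_eq_getElem?]; exact hl
    constructor
    · rw [hπ', List.append_assoc, List.head?_append]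
      rcases Nat.eq_zero_or_pos i with h0 | h0
      · subst h0
        simp only [List.take_zero, List.head?_nil, Option.none_or, List.head?_append]
        rw [List.head?_eq_head hqne, hqhead]
        rw [List.getElem?_eq_getElem hlen0] at h0s
        exact h0s
      · have : (π.take i).head? = some s := by
          rw [List.head?_eq_getElem?, List.getElem?_take_of_lt h0]
          exact h0s
        rw [this]
        rfl
    · rw [hπ', List.getLast?_append]
      rcases eq_or_lt_of_le (show j + 1 ≤ π.length by omega) with hje | hjl
      · have : π.drop (j+1) = [] := by
          rw [List.drop_eq_nil_iff]; omega
        rw [this]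
        simp only [List.getLast?_nil, Option.none_or, List.getLast?_append]
        rw [List.getLast?_eq_getLast hqne, hqlast]
        rw [show π.length - 1 = j by omega, List.getElem?_eq_getElem hj] at hts
        exact hts
      · have : (π.drop (j+1)).getLast? = some t := by
          rw [List.getLast?_eq_getElem?, List.length_drop, List.getElem?_drop,
            show j + 1 + (π.length - (j+1) - 1) = π.length - 1 by omega]
          exact hts
        rw [this]
        rfl
  have hlt' : walkLen len π' < walkLen len π := by
    rw [hw2, h3]
    exact ENNReal.add_lt_add_right hADfin.2 (ENNReal.add_lt_add_left hADfin.1 hlt)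
  exact lt_irrefl _ (((gdist_le_walkLen len hπ's).trans_lt hlt').trans_eq hshort)


lemma walkLen_sub_add (len : V → V → ℝ≥0∞) (π : List V) {i j k : ℕ}
    (hij : i ≤ j) (hjk : j ≤ k) (hk : k < π.length) :
    walkLen len ((π.drop i).take (k-i+1)) =
      walkLen len ((π.drop i).take (j-i+1)) + walkLen len ((π.drop j).take (k-j+1)) := by
  rw [walkLen_split len (j-i) ((π.drop i).take (k-i+1))
      (by simp [List.length_take, List.length_drop]; omega),
    List.take_take, show min (j-i+1) (k-i+1) = j-i+1 by omega,
    List.drop_take, List.drop_drop, show i+(j-i) = j by omega,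
    show k-i+1-(j-i) = k-j+1 by omega]

/-- in an undirected graph with positive weights, a vertex `w`
cannot be adjacent — with all five edge weights in the same dyadic class
`[2^y, 2^(y+1))` and `len(v_{i_k}, w) ≤ dist(v_{i_k}, v_{i_{k+1}})` for
`k = 1,…,4` — to five distinct vertices of a shortest path: this yields a
contradiction. Hence at most 4 such vertices per dyadic class. -/
theorem stmt_11 (len : V → V → ℝ≥0∞)
    (hsymm : ∀ u v, len u v = len v u) (hpos : ∀ u v, 0 < len u v)
    (s t : V) (π : List V) (hπ : IsWalkFromTo s t π)
    (hshort : walkLen len π = gdist len s t) (hfin : gdist len s t ≠ ∞)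
    (y : ℤ) (w : V) (idx : ℕ → ℕ)
    (hmono : ∀ k l, k < l → l < 5 → idx k < idx l)
    (hb : ∀ k, k < 5 → idx k < π.length)
    (hdistinct : ∀ k l (hk : k < 5) (hl : l < 5), k ≠ l →
      π.get ⟨idx k, hb k hk⟩ ≠ π.get ⟨idx l, hb l hl⟩)
    (hclass : ∀ k (hk : k < 5),
      (2:ℝ≥0∞) ^ y ≤ len (π.get ⟨idx k, hb k hk⟩) w ∧
        len (π.get ⟨idx k, hb k hk⟩) w < (2:ℝ≥0∞) ^ (y + 1))
    (hle : ∀ k, (hk : k < 4) →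
      len (π.get ⟨idx k, hb k (by omega)⟩) w ≤
        gdist len (π.get ⟨idx k, hb k (by omega)⟩)
          (π.get ⟨idx (k+1), hb (k+1) (by omega)⟩)) :
    False := by
  have hbk : ∀ k, k < 5 → idx k < π.length := hb
  set x : ∀ k, k < 5 → V := fun k hk => π[idx k]'(hb k hk) with hx
  have hget : ∀ k (hk : k < 5), π.get ⟨idx k, hb k hk⟩ = x k hk := fun _ _ => rfl
  -- additivity along the shortest path
  have hseg : ∀ a b (ha : a < 5) (hab : a ≤ b) (hbb : b < 5),
      gdist len (x a ha) (x b hbb) =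
        walkLen len ((π.drop (idx a)).take (idx b - idx a + 1)) := by
    intro a b ha hab hbb
    have : idx a ≤ idx b := by
      rcases eq_or_lt_of_le hab with rfl | h; · exact le_rfl
      · exact (hmono a b h hbb).le
    exact gdist_sub len hπ hshort hfin this (hb b hbb)
  have hii : ∀ a b, a ≤ b → b < 5 → idx a ≤ idx b := by
    intro a b hab hbb
    rcases eq_or_lt_of_le hab with rfl | h; · exact le_rfl
    · exact (hmono a b h hbb).le
  have hsum : gdist len (x 0 (by omega)) (x 4 (by omega)) =
      gdist len (x 0 (by omega)) (x 1 (by omega)) +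
      gdist len (x 1 (by omega)) (x 2 (by omega)) +
      gdist len (x 2 (by omega)) (x 3 (by omega)) +
      gdist len (x 3 (by omega)) (x 4 (by omega)) := by
    rw [hseg 0 4 (by omega) (by omega) (by omega),
      hseg 0 1 (by omega) (by omega) (by omega),
      hseg 1 2 (by omega) (by omega) (by omega),
      hseg 2 3 (by omega) (by omega) (by omega),
      hseg 3 4 (by omega) (by omega) (by omega),
      walkLen_sub_add len π (hii 0 1 (by omega) (by omega)) (hii 1 4 (by omega) (by omega)) (hb 4 (by omega)),
      walkLen_sub_add len π (hii 1 2 (by omega) (by omega)) (hii 2 4 (by omega) (by omega)) (hb 4 (by omega)),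
      walkLen_sub_add len π (hii 2 3 (by omega) (by omega)) (hii 3 4 (by omega) (by omega)) (hb 4 (by omega))]
    ring
  -- lower bound
  have h2y : ∀ k (hk : k < 4), (2:ℝ≥0∞)^y ≤
      gdist len (x k (by omega)) (x (k+1) (by omega)) :=
    fun k hk => le_trans (hclass k (by omega)).1 (hle k hk)
  have hlow : (2:ℝ≥0∞)^y + 2^y + 2^y + 2^y ≤
      gdist len (x 0 (by omega)) (x 4 (by omega)) := by
    rw [hsum]
    exact add_le_add (add_le_add (add_le_add (h2y 0 (by omega)) (h2y 1 (by omega)))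
      (h2y 2 (by omega))) (h2y 3 (by omega))
  -- upper bound via the shortcut through w
  have hwalk : IsWalkFromTo (x 0 (by omega)) (x 4 (by omega))
      [x 0 (by omega), w, x 4 (by omega)] := ⟨rfl, rfl⟩
  have hup : gdist len (x 0 (by omega)) (x 4 (by omega)) ≤
      len (x 0 (by omega)) w + len (x 4 (by omega)) w := by
    refine le_trans (gdist_le_walkLen len hwalk) ?_
    simp [walkLen, hsymm w]
  have hlt : len (x 0 (by omega)) w + len (x 4 (by omega)) w <
      (2:ℝ≥0∞)^(y+1) + 2^(y+1) :=
    ENNReal.add_lt_add (hclass 0 (by omega)).2 (hclass 4 (by omega)).2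
  have harith : (2:ℝ≥0∞)^(y+1) + 2^(y+1) = 2^y + 2^y + 2^y + 2^y := by
    rw [ENNReal.zpow_add two_ne_zero (by simp) y 1, zpow_one, mul_two]
    ring
  exact absurd hlow (not_le.mpr (lt_of_le_of_lt hup (harith ▸ hlt)))
end
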